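/- arXiv:1611.05961 — 2 statements merged into one kernel-verified Lean document; each statement's English description precedes it below -/
import Mathlib

section
/- Let J : ℝ^{d₁} → ℝ be convex and suppose there is K > 0 such that every subgradient g of J at any point x (i.e. any g ∈ ℝ^{d₁} with J(x') ≥ J(x) + ⟨g, x' − x⟩ for all x' ∈ ℝ^{d₁}) satisfies ‖g‖ ≤ K(1+‖x‖). Fix r > 0, ε > 0, a linear map C : ℝ^{d₁} → ℝ^{d₂} and w ∈ ℝ^{d₂}, and define Ĵ(x) := J(x) + (ε/(2r²))‖x‖² + ((K+1)/2)·max{‖x‖² − r², 0} and L(x,y) := Ĵ(x) + ⟨y, Cx − w⟩. Then for every y ∈ ℝ^{d₂} the function x ↦ L(x,y) attains its infimum over ℝ^{d₁} at a unique point λ(y), and ‖λ(y)‖ ≤ K'(1+‖y‖), where K' := max{K, r, ‖C*‖} and C* is the adjoint of C. -/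
open MeasureTheory Metric Filter Topology
open scoped Pointwise NNReal ENNReal RealInnerProductSpace

abbrev Euc (n : ℕ) : Type := EuclideanSpace ℝ (Fin n)

-- linear lower bound for convex functions
lemma convex_lower_bound (d : ℕ) (J : Euc d → ℝ) (hJconv : ConvexOn ℝ Set.univ J) :
    ∃ B : ℝ, 0 < B ∧ ∀ x : Euc d, -(B * (1 + ‖x‖)) ≤ J x := by
  have hJc : Continuous J := by
    have := hJconv.continuousOn isOpen_univ
    rwa [continuousOn_univ] at this
  obtain ⟨z, hz, hzmin'⟩ := (isCompact_closedBall (0 : Euc d) 1).exists_isMinOn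
    (nonempty_closedBall.2 zero_le_one) hJc.continuousOn
  have hzmin : ∀ x ∈ closedBall (0 : Euc d) 1, J z ≤ J x := fun x hx => hzmin' hx
  set m := J z with hm
  refine ⟨|m| + |J 0| + 1, by positivity, fun x => ?_⟩
  by_cases hx : ‖x‖ ≤ 1
  · have h1 : m ≤ J x := hzmin x (by simpa [mem_closedBall, dist_eq_norm] using hx)
    have : -|m| ≤ m := neg_abs_le m
    nlinarith [norm_nonneg x, abs_nonneg (J 0), abs_nonneg m,
      mul_nonneg (by positivity : (0:ℝ) ≤ |m| + |J 0| + 1) (norm_nonneg x)]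
  · push_neg at hx
    have hxpos : (0:ℝ) < ‖x‖ := lt_trans one_pos hx
    set s : ℝ := 1 / ‖x‖ with hs
    have hs0 : 0 < s := by positivity
    have hs1 : s ≤ 1 := by rw [hs]; rw [div_le_one hxpos]; linarith
    have hcvx := hJconv.2 (Set.mem_univ x) (Set.mem_univ (0 : Euc d)) hs0.le
      (by linarith : (0:ℝ) ≤ 1 - s) (by ring)
    have hnorm : ‖s • x‖ = 1 := by
      rw [norm_smul, Real.norm_eq_abs, abs_of_pos hs0, hs]
      field_simp
    have hzle : m ≤ J (s • x + (1 - s) • (0 : Euc d)) :=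
      hzmin _ (by simp [mem_closedBall, dist_eq_norm, hnorm])
    -- m ≤ s * J x + (1-s) * J 0
    have key : m ≤ s * J x + (1 - s) * J 0 := le_trans hzle hcvx
    have hsx : s * ‖x‖ = 1 := by rw [hs, one_div, inv_mul_cancel₀ hxpos.ne']
    -- J x ≥ (m - (1-s) J 0)/s = ‖x‖ m - (‖x‖-1) J 0
    have h2 : ‖x‖ * m - (‖x‖ - 1) * J 0 ≤ J x := by
      have := mul_le_mul_of_nonneg_left key (le_of_lt hxpos)
      calc ‖x‖ * m - (‖x‖ - 1) * J 0 ≤ ‖x‖ * (s * J x + (1-s) * J 0) - (‖x‖-1) * J 0 := by nlinarith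
        _ = J x := by linear_combination (J x - J 0) * hsx
    linarith [mul_le_mul_of_nonneg_left (neg_abs_le m) hxpos.le,
      mul_le_mul_of_nonneg_left (le_abs_self (J 0)) (by linarith : (0:ℝ) ≤ ‖x‖ - 1),
      abs_nonneg m, abs_nonneg (J 0)]

set_option maxHeartbeats 1000000 in
/-- The penalized Lagrangian `L(x,y) = Ĵ(x) + ⟨y, Cx − w⟩`, with
`Ĵ(x) = J(x) + (ε/(2r²))‖x‖² + ((K+1)/2)·max{‖x‖² − r², 0}`, has for every `y` a unique
minimizer `λ(y)` in `x`, which satisfies `‖λ(y)‖ ≤ K'(1+‖y‖)` with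
`K' = max{K, r, ‖C*‖}`. -/
theorem penalized_lagrangian_unique_minimizer
    (d₁ d₂ : ℕ) (hd₁ : 0 < d₁) (hd₂ : 0 < d₂)
    (J : Euc d₁ → ℝ) (hJconv : ConvexOn ℝ Set.univ J)
    (K : ℝ) (hK : 0 < K)
    -- every subgradient of J at x has norm at most K(1+‖x‖)
    (hsub : ∀ x gsg : Euc d₁, (∀ x' : Euc d₁, J x + ⟪gsg, x' - x⟫ ≤ J x') →
      ‖gsg‖ ≤ K * (1 + ‖x‖))
    (r ε : ℝ) (hr : 0 < r) (hε : 0 < ε)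
    (C : Euc d₁ →L[ℝ] Euc d₂) (w : Euc d₂)
    (Jhat : Euc d₁ → ℝ)
    (hJhat : ∀ x, Jhat x =
      J x + (ε / (2 * r ^ 2)) * ‖x‖ ^ 2 + ((K + 1) / 2) * max (‖x‖ ^ 2 - r ^ 2) 0)
    (L : Euc d₁ → Euc d₂ → ℝ)
    (hL : ∀ x y, L x y = Jhat x + ⟪y, C x - w⟫) :
    ∀ y : Euc d₂, ∃ xstar : Euc d₁,
      (∀ x : Euc d₁, L xstar y ≤ L x y) ∧
      (∀ x' : Euc d₁, (∀ x : Euc d₁, L x' y ≤ L x y) → x' = xstar) ∧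
      ‖xstar‖ ≤ max (max K r) ‖ContinuousLinearMap.adjoint C‖ * (1 + ‖y‖) := by
  intro y
  set c : ℝ := ε / (2 * r ^ 2) with hc
  have hcpos : 0 < c := by positivity
  set k2 : ℝ := (K + 1) / 2 with hk2
  have hk2pos : 0 < k2 := by positivity
  set Cy : Euc d₁ := ContinuousLinearMap.adjoint C y with hCy
  have hinner : ∀ x : Euc d₁, (⟪y, C x - w⟫) = ⟪Cy, x⟫ - ⟪y, w⟫ := by
    intro x
    rw [inner_sub_right, hCy, ContinuousLinearMap.adjoint_inner_left]
  have hform : ∀ x : Euc d₁, L x y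
      = J x + c * ‖x‖ ^ 2 + k2 * max (‖x‖ ^ 2 - r ^ 2) 0 + ⟪y, C x - w⟫ := by
    intro x; rw [hL, hJhat]
  have hJc : Continuous J := by
    have := hJconv.continuousOn isOpen_univ
    rwa [continuousOn_univ] at this
  -- continuity of L · y
  have hLc : Continuous (fun x => L x y) := by
    have hfe : (fun x => L x y)
        = fun x => J x + c * ‖x‖ ^ 2 + k2 * max (‖x‖ ^ 2 - r ^ 2) 0 + ⟪y, C x - w⟫ :=
      funext hform
    rw [hfe]
    have h1 : Continuous fun x : Euc d₁ => (⟪y, C x - w⟫) :=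
      Continuous.inner continuous_const (C.continuous.sub continuous_const)
    fun_prop
  -- coercivity
  obtain ⟨B, hB, hBlow⟩ := convex_lower_bound d₁ J hJconv
  set D : ℝ := B + ‖Cy‖ with hD
  set E : ℝ := B + |⟪y, w⟫| with hE
  have keylow : ∀ x : Euc d₁, c * ‖x‖ ^ 2 - D * ‖x‖ - E ≤ L x y := by
    intro x
    rw [hform, hinner]
    have h1 := hBlow x
    have h2 : -(‖Cy‖ * ‖x‖) ≤ ⟪Cy, x⟫ := by
      have := abs_real_inner_le_norm Cy x
      have := neg_abs_le (⟪Cy, x⟫)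
      linarith
    have h3 : (0:ℝ) ≤ k2 * max (‖x‖ ^ 2 - r ^ 2) 0 :=
      mul_nonneg hk2pos.le (le_max_right _ _)
    have h4 : ⟪y, w⟫ ≤ |⟪y, w⟫| := le_abs_self _
    rw [hD, hE]; linarith
  have hq : Tendsto (fun t : ℝ => c * t ^ 2 - D * t - E) atTop atTop := by
    have h1 : Tendsto (fun t : ℝ => c * t + -D) atTop atTop :=
      tendsto_atTop_add_const_right _ (-D) (Tendsto.const_mul_atTop hcpos tendsto_id)
    have h2 : Tendsto (fun t : ℝ => t * (c * t + -D) + -E) atTop atTop :=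
      tendsto_atTop_add_const_right _ (-E) (Tendsto.atTop_mul_atTop₀ tendsto_id h1)
    exact h2.congr (fun t => by ring)
  have hcoer : Tendsto (fun x => L x y) (cocompact (Euc d₁)) atTop :=
    tendsto_atTop_mono keylow (hq.comp tendsto_norm_cocompact_atTop)
  obtain ⟨xstar, hmin⟩ := hLc.exists_forall_le hcoer
  refine ⟨xstar, hmin, ?_, ?_⟩
  · -- uniqueness
    intro u hu
    by_contra hne
    have heq : L u y = L xstar y := le_antisymm (hu xstar) (hmin u)
    set v := xstar with hv
    set mid : Euc d₁ := (1/2 : ℝ) • (u + v) with hmid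
    have hpar := parallelogram_law_with_norm ℝ u v
    have hmn : ‖mid‖ = (1/2) * ‖u + v‖ := by
      rw [hmid, norm_smul]; norm_num
    have hsubn : ‖(1/2 : ℝ) • (u - v)‖ = (1/2) * ‖u - v‖ := by
      rw [norm_smul]; norm_num
    have hδpos : 0 < ‖(1/2 : ℝ) • (u - v)‖ ^ 2 := by
      have h0 : u - v ≠ 0 := sub_ne_zero.2 hne
      have h1 : (1/2 : ℝ) • (u - v) ≠ 0 := smul_ne_zero (by norm_num) h0
      exact pow_pos (norm_pos_iff.2 h1) 2
    have hpar' : ‖u + v‖ ^ 2 + ‖u - v‖ ^ 2 = 2 * (‖u‖ ^ 2 + ‖v‖ ^ 2) := by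
      have h := parallelogram_law_with_norm ℝ u v
      ring_nf at h ⊢
      linarith
    have hmidnorm : ‖mid‖ ^ 2 = (‖u‖ ^ 2 + ‖v‖ ^ 2) / 2 - ‖(1/2 : ℝ) • (u - v)‖ ^ 2 := by
      rw [hmn, hsubn]
      linear_combination hpar' / 4
    have hJmid : J mid ≤ (J u + J v) / 2 := by
      have h := hJconv.2 (Set.mem_univ u) (Set.mem_univ v)
        (by norm_num : (0:ℝ) ≤ 1/2) (by norm_num : (0:ℝ) ≤ 1/2) (by norm_num)
      have hmid2 : mid = (1/2 : ℝ) • u + (1/2 : ℝ) • v := by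
        rw [hmid, smul_add]
      rw [hmid2]
      rw [smul_eq_mul, smul_eq_mul] at h
      linarith
    have hmax : max (‖mid‖ ^ 2 - r ^ 2) 0
        ≤ (max (‖u‖ ^ 2 - r ^ 2) 0 + max (‖v‖ ^ 2 - r ^ 2) 0) / 2 := by
      apply max_le
      · have h1 := le_max_left (‖u‖ ^ 2 - r ^ 2) 0
        have h2 := le_max_left (‖v‖ ^ 2 - r ^ 2) 0
        rw [hmidnorm]; linarith
      · have h1 := le_max_right (‖u‖ ^ 2 - r ^ 2) 0
        have h2 := le_max_right (‖v‖ ^ 2 - r ^ 2) 0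
        linarith
    have hinnmid : (⟪y, C mid - w⟫) = ((⟪y, C u - w⟫) + (⟪y, C v - w⟫)) / 2 := by
      rw [hinner, hinner, hinner]
      have : (⟪Cy, mid⟫) = ((⟪Cy, u⟫) + (⟪Cy, v⟫)) / 2 := by
        rw [hmid, real_inner_smul_right, inner_add_right]; ring
      linarith
    have hlt : L mid y < L u y := by
      rw [hform, hform u, hinnmid]
      have hLv := hform v
      have hmaxmul : k2 * max (‖mid‖ ^ 2 - r ^ 2) 0
          ≤ k2 * ((max (‖u‖ ^ 2 - r ^ 2) 0 + max (‖v‖ ^ 2 - r ^ 2) 0) / 2) :=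
        mul_le_mul_of_nonneg_left hmax hk2pos.le
      have hcmul : c * ‖mid‖ ^ 2
          = c * ((‖u‖ ^ 2 + ‖v‖ ^ 2) / 2) - c * ‖(1/2 : ℝ) • (u - v)‖ ^ 2 := by
        rw [hmidnorm]; ring
      have hδc : 0 < c * ‖(1/2 : ℝ) • (u - v)‖ ^ 2 := mul_pos hcpos hδpos
      have hLu := hform u
      rw [hform u, hform v] at heq
      linarith
    have := hu mid
    linarith
  · -- bound
    set K' : ℝ := max (max K r) ‖ContinuousLinearMap.adjoint C‖ with hK'
    have hK'r : r ≤ K' := le_trans (le_max_right K r) (le_max_left _ _)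
    have hK'K : K ≤ K' := le_trans (le_max_left K r) (le_max_left _ _)
    have hK'C : ‖ContinuousLinearMap.adjoint C‖ ≤ K' := le_max_right _ _
    have hy1 : (1:ℝ) ≤ 1 + ‖y‖ := by linarith [norm_nonneg y]
    by_cases hxr : ‖xstar‖ ≤ r
    · have hK'pos : 0 < K' := lt_of_lt_of_le hr hK'r
      calc ‖xstar‖ ≤ r := hxr
        _ ≤ K' := hK'r
        _ ≤ K' * (1 + ‖y‖) := le_mul_of_one_le_right hK'pos.le hy1
    · push_neg at hxr
      set a : ℝ := c + k2 with ha
      have hapos : 0 < a := by positivity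
      set g : Euc d₁ := -((2 * a) • xstar + Cy) with hg
      have hsubg : ∀ x' : Euc d₁, J xstar + ⟪g, x' - xstar⟫ ≤ J x' := by
        intro x'
        by_cases hvx : x' = xstar
        · simp [hvx]
        set v : Euc d₁ := x' - xstar with hv
        have hv0 : v ≠ 0 := sub_ne_zero.2 hvx
        have hvn : 0 < ‖v‖ := norm_pos_iff.2 hv0
        have hgv : (⟪g, v⟫) = -((2 * a) * ⟪xstar, v⟫ + ⟪Cy, v⟫) := by
          rw [hg, inner_neg_left, inner_add_left, real_inner_smul_left]
        have key : J xstar ≤ J x' + (2 * a) * ⟪xstar, v⟫ + ⟪Cy, v⟫ := by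
          refine le_of_forall_pos_le_add (fun η hη => ?_)
          set t : ℝ := min ((‖xstar‖ - r) / (2 * ‖v‖)) (min 1 (η / (a * ‖v‖ ^ 2 + 1))) with htdef
          have ht0 : 0 < t := by
            apply lt_min
            · exact div_pos (by linarith) (by positivity)
            · exact lt_min one_pos (div_pos hη (by positivity))
          have ht1 : t ≤ 1 := le_trans (min_le_right _ _) (min_le_left _ _)
          have htr : t * ‖v‖ < ‖xstar‖ - r := by
            have h1 : t ≤ (‖xstar‖ - r) / (2 * ‖v‖) := min_le_left _ _
            have h2 : t * ‖v‖ ≤ (‖xstar‖ - r) / 2 := by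
              rw [div_mul_eq_div_div] at h1
              calc t * ‖v‖ ≤ ((‖xstar‖ - r) / 2 / ‖v‖) * ‖v‖ :=
                    mul_le_mul_of_nonneg_right h1 hvn.le
                _ = (‖xstar‖ - r) / 2 := by
                    field_simp
            linarith
          have htη : a * t * ‖v‖ ^ 2 ≤ η := by
            have h1 : t ≤ η / (a * ‖v‖ ^ 2 + 1) := le_trans (min_le_right _ _) (min_le_right _ _)
            have h2 : a * ‖v‖ ^ 2 > 0 := by positivity
            calc a * t * ‖v‖ ^ 2 = t * (a * ‖v‖ ^ 2) := by ring
              _ ≤ (η / (a * ‖v‖ ^ 2 + 1)) * (a * ‖v‖ ^ 2) :=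
                  mul_le_mul_of_nonneg_right h1 h2.le
              _ ≤ η := by
                  rw [div_mul_eq_mul_div, div_le_iff₀ (by positivity)]
                  nlinarith [hη.le, h2.le]
          set xt : Euc d₁ := xstar + t • v with hxt
          have hxtn : ‖xstar‖ - t * ‖v‖ ≤ ‖xt‖ := by
            have := norm_sub_norm_le xstar (-(t • v))
            rw [sub_neg_eq_add, norm_neg, ← hxt] at this
            have hns : ‖t • v‖ = t * ‖v‖ := by
              rw [norm_smul, Real.norm_eq_abs, abs_of_pos ht0]
            linarith
          have hxtr : r < ‖xt‖ := by linarith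
          have hmaxt : max (‖xt‖ ^ 2 - r ^ 2) 0 = ‖xt‖ ^ 2 - r ^ 2 :=
            max_eq_left (by nlinarith)
          have hmaxs : max (‖xstar‖ ^ 2 - r ^ 2) 0 = ‖xstar‖ ^ 2 - r ^ 2 :=
            max_eq_left (by nlinarith)
          have hxtsq : ‖xt‖ ^ 2 = ‖xstar‖ ^ 2 + 2 * t * ⟪xstar, v⟫ + t ^ 2 * ‖v‖ ^ 2 := by
            rw [hxt, norm_add_sq_real, real_inner_smul_right, norm_smul,
              Real.norm_eq_abs, abs_of_pos ht0]
            ring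
          have hconv : J xt ≤ (1 - t) * J xstar + t * J x' := by
            have h := hJconv.2 (Set.mem_univ xstar) (Set.mem_univ x')
              (by linarith : (0:ℝ) ≤ 1 - t) ht0.le (by ring)
            have : (1 - t) • xstar + t • x' = xt := by
              rw [hxt, hv]; module
            rw [this] at h
            simpa [smul_eq_mul] using h
          have hinnt : (⟪Cy, xt⟫) = ⟪Cy, xstar⟫ + t * ⟪Cy, v⟫ := by
            rw [hxt, inner_add_right, real_inner_smul_right]
          have hml := hmin xt
          rw [hform, hform xt, hinner, hinner, hmaxt, hmaxs, hxtsq, hinnt] at hml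
          have hdiv : t * J xstar ≤ t * (J x' + (2 * a) * ⟪xstar, v⟫ + ⟪Cy, v⟫
              + a * t * ‖v‖ ^ 2) := by nlinarith [hconv, hml]
          have hfin := le_of_mul_le_mul_left hdiv ht0
          linarith
        linarith [key, hgv.ge, hgv.le]
      have hgK := hsub xstar g hsubg
      have hgn : ‖g‖ = ‖(2 * a) • xstar + Cy‖ := norm_neg _
      have h1 : (2 * a) * ‖xstar‖ ≤ ‖(2 * a) • xstar + Cy‖ + ‖Cy‖ := by
        have h := norm_sub_norm_le ((2 * a) • xstar) (-Cy)
        simp only [norm_neg, sub_neg_eq_add] at h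
        have : ‖(2 * a) • xstar‖ = (2 * a) * ‖xstar‖ := by
          rw [norm_smul, Real.norm_eq_abs, abs_of_pos (by positivity : (0:ℝ) < 2 * a)]
        linarith
      have hCyb : ‖Cy‖ ≤ ‖ContinuousLinearMap.adjoint C‖ * ‖y‖ := by
        rw [hCy]; exact (ContinuousLinearMap.adjoint C).le_opNorm y
      have h2a : K + 1 ≤ 2 * a := by rw [ha, hk2]; linarith [hcpos]
      -- (2a)‖x*‖ ≤ K(1+‖x*‖) + ‖C*‖‖y‖
      have hfin : (K + 1) * ‖xstar‖ ≤ K * (1 + ‖xstar‖) + ‖ContinuousLinearMap.adjoint C‖ * ‖y‖ := by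
        have := hgK
        rw [hgn] at this
        nlinarith [norm_nonneg xstar,
          mul_nonneg (by linarith : (0:ℝ) ≤ 2 * a - (K + 1)) (norm_nonneg xstar)]
      have hCK' : ‖ContinuousLinearMap.adjoint C‖ * ‖y‖ ≤ K' * ‖y‖ :=
        mul_le_mul_of_nonneg_right hK'C (norm_nonneg y)
      nlinarith [norm_nonneg y]
end

section
/- Let C : ℝ^{d₁} → ℝ^{d₂} be a linear map, w ∈ ℝ^{d₂}, Ĵ : ℝ^{d₁} → ℝ a continuous function, and define L(x,y) := Ĵ(x) + ⟨y, Cx − w⟩. Let λ : ℝ^{d₂} → ℝ^{d₁} be continuous and satisfy, for some K' > 0, L(λ(y'), y') = inf_{x ∈ ℝ^{d₁}} L(x, y') and ‖λ(y')‖ ≤ K'(1+‖y'‖) for every y' ∈ ℝ^{d₂}, and assume the dual function Q(y') := inf_{x ∈ ℝ^{d₁}} L(x, y') is bounded above on ℝ^{d₂}. Let y : [0,∞) → ℝ^{d₂} satisfy y(t) = y(0) + ∫_0^t (Cλ(y(q)) − w) dq for all t ≥ 0 and sup_{t ≥ 0} ‖y(t)‖ < ∞. Then ‖Cλ(y(t))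 − w‖ → 0 as t → ∞, and dist(y(t), 𝒴) → 0 as t → ∞, where 𝒴 := {y' ∈ ℝ^{d₂} : Cλ(y') = w} and dist denotes the Euclidean distance from a point to a set. -/
open MeasureTheory Metric Filter Topology
open scoped Pointwise NNReal ENNReal RealInnerProductSpace

lemma dac_aux_integrable (d : ℕ) (G : Euc d → Euc d) (y : ℝ → Euc d)
    (hy : ∀ t, 0 ≤ t → y t = y 0 + ∫ q in (0:ℝ)..t, G (y q))
    (R : ℝ) (hR : ∀ t, 0 ≤ t → ‖G (y t)‖ ≤ R) :
    ∀ t, 0 ≤ t → IntervalIntegrable (fun q => G (y q)) volume 0 t := by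
  intro t ht
  set g : ℝ → Euc d := fun q => G (y q) with hg
  set A : Set ℝ := {u | u ∈ Set.Icc (0:ℝ) t ∧ IntervalIntegrable g volume 0 u} with hA
  have h0A : (0:ℝ) ∈ A := ⟨⟨le_refl 0, ht⟩, IntervalIntegrable.refl⟩
  have hAne : A.Nonempty := ⟨0, h0A⟩
  have hAbdd : BddAbove A := ⟨t, fun u hu => hu.1.2⟩
  have hmono : ∀ u ∈ A, ∀ v, 0 ≤ v → v ≤ u → v ∈ A := by
    intro u hu v hv0 hvu
    refine ⟨⟨hv0, hvu.trans hu.1.2⟩, hu.2.mono_set ?_⟩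
    rw [Set.uIcc_of_le hv0, Set.uIcc_of_le (hv0.trans hvu)]
    exact Set.Icc_subset_Icc_right hvu
  set T := sSup A with hT
  have hT0 : 0 ≤ T := le_csSup hAbdd h0A
  have hTt : T ≤ t := csSup_le hAne fun u hu => hu.1.2
  have hlt : ∀ v, 0 ≤ v → v < T → IntervalIntegrable g volume 0 v := by
    intro v hv0 hvT
    obtain ⟨u, huA, hvu⟩ := exists_lt_of_lt_csSup hAne hvT
    exact (hmono u huA v hv0 hvu.le).2
  have hIntT : IntervalIntegrable g volume 0 T := by
    rw [intervalIntegrable_iff_integrableOn_Ioc_of_le hT0,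
      integrableOn_Ioc_iff_integrableOn_Ioo]
    have hunion : Set.Ioo (0:ℝ) T = ⋃ n : ℕ, Set.Ioc (0:ℝ) (T - T / (n+1)) := by
      ext x
      simp only [Set.mem_Ioo, Set.mem_iUnion, Set.mem_Ioc]
      constructor
      · rintro ⟨hx0, hxT⟩
        have hTpos : 0 < T := lt_of_le_of_lt (le_of_lt hx0) hxT
        obtain ⟨n, hn⟩ := exists_nat_gt (T / (T - x))
        refine ⟨n, hx0, ?_⟩
        have hTx : (0:ℝ) < T - x := by linarith
        have h2 : T / (T - x) < ↑n + 1 := hn.trans (lt_add_one _)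
        have h3 : T < (↑n + 1) * (T - x) := (div_lt_iff₀ hTx).mp h2
        have h1 : T / (↑n + 1) < T - x := by
          rw [div_lt_iff₀ (by positivity)]
          linarith [h3]
        linarith
      · rintro ⟨n, hx0, hxn⟩
        have : (0:ℝ) ≤ T / (n+1) := by positivity
        refine ⟨hx0, ?_⟩
        have hTpos : 0 < T := by
          by_contra hc
          push_neg at hc
          have : T = 0 := le_antisymm hc hT0
          simp [this] at hxn
          linarith
        have : 0 < T / (n+1) := by positivity
        linarith
    constructor
    · rw [hunion, aestronglyMeasurable_iUnion_iff]
      intro n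
      have hv0 : 0 ≤ T - T / (n+1) := by
        rw [sub_nonneg, div_le_iff₀ (by positivity)]
        nlinarith
      by_cases hTpos : 0 < T
      · have hvT : T - T / (n+1) < T := by
          have : 0 < T / (n+1) := by positivity
          linarith
        have := hlt _ hv0 hvT
        rw [intervalIntegrable_iff_integrableOn_Ioc_of_le hv0] at this
        exact this.aestronglyMeasurable
      · have : T = 0 := le_antisymm (not_lt.mp hTpos) hT0
        have h0 : Set.Ioc (0:ℝ) (T - T/(n+1)) = ∅ := by
          apply Set.Ioc_eq_empty
          simp [this]
        rw [h0, Measure.restrict_empty]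
        exact aestronglyMeasurable_zero_measure _
    · apply MeasureTheory.HasFiniteIntegral.of_bounded (C := R)
      filter_upwards [ae_restrict_mem measurableSet_Ioo] with x hx
      exact hR x hx.1.le
  rcases eq_or_lt_of_le hTt with hEq | hltT
  · rw [← hEq]; exact hIntT
  · have hfrozen : ∀ s, s ∈ Set.Ioc T t → g s = G (y 0) := by
      intro s hs
      have hs0 : 0 ≤ s := hT0.trans hs.1.le
      have hnotA : s ∉ A := by
        intro hsA
        exact absurd (le_csSup hAbdd hsA) (not_le.mpr hs.1)
      have hnotInt : ¬ IntervalIntegrable g volume 0 s := fun h =>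
        hnotA ⟨⟨hs0, hs.2⟩, h⟩
      have : y s = y 0 := by
        rw [hy s hs0, intervalIntegral.integral_undef hnotInt, add_zero]
      rw [hg]; simp only [this]
    rw [intervalIntegrable_iff_integrableOn_Ioc_of_le ht]
    have hsplit : Set.Ioc (0:ℝ) t = Set.Ioc 0 T ∪ Set.Ioc T t :=
      (Set.Ioc_union_Ioc_eq_Ioc hT0 hTt).symm
    rw [hsplit]
    apply MeasureTheory.IntegrableOn.union
    · rw [← intervalIntegrable_iff_integrableOn_Ioc_of_le hT0]; exact hIntT
    · rw [MeasureTheory.integrableOn_congr_fun hfrozen measurableSet_Ioc]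
      exact (integrableOn_const_iff).mpr (Or.inr measure_Ioc_lt_top)

lemma dac_Intst (d₂ : ℕ) (g : ℝ → Euc d₂)
    (hInt : ∀ t, 0 ≤ t → IntervalIntegrable g volume 0 t) :
    ∀ s t, 0 ≤ s → s ≤ t → IntervalIntegrable g volume s t := by
  intro s t hs hst
  apply (hInt t (hs.trans hst)).mono_set
  rw [Set.uIcc_of_le hst, Set.uIcc_of_le (hs.trans hst)]
  exact Set.Icc_subset_Icc_left hs

lemma dac_ydiff (d₂ : ℕ) (yf g : ℝ → Euc d₂)
    (hyf : ∀ t : ℝ, 0 ≤ t → yf t = yf 0 + ∫ q in (0 : ℝ)..t, g q)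
    (hInt : ∀ t, 0 ≤ t → IntervalIntegrable g volume 0 t) :
    ∀ s t, 0 ≤ s → s ≤ t → yf t - yf s = ∫ q in s..t, g q := by
  intro s t hs hst
  rw [hyf t (hs.trans hst), hyf s hs]
  rw [← intervalIntegral.integral_add_adjacent_intervals (hInt s hs)
    (dac_Intst d₂ g hInt s t hs hst)]
  abel

lemma dac_yLip (d₂ : ℕ) (yf g : ℝ → Euc d₂)
    (hyf : ∀ t : ℝ, 0 ≤ t → yf t = yf 0 + ∫ q in (0 : ℝ)..t, g q)
    (hInt : ∀ t, 0 ≤ t → IntervalIntegrable g volume 0 t)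
    (R : ℝ) (hgR : ∀ t, 0 ≤ t → ‖g t‖ ≤ R) :
    ∀ s t, 0 ≤ s → s ≤ t → ‖yf t - yf s‖ ≤ R * (t - s) := by
  intro s t hs hst
  rw [dac_ydiff d₂ yf g hyf hInt s t hs hst]
  have hb : ∀ x ∈ Set.uIoc s t, ‖g x‖ ≤ R := by
    intro x hx
    rw [Set.uIoc_of_le hst] at hx
    exact hgR x (hs.trans hx.1.le)
  have := intervalIntegral.norm_integral_le_of_norm_le_const hb
  rwa [abs_of_nonneg (by linarith)] at this

lemma dac_yCont (d₂ : ℕ) (yf g : ℝ → Euc d₂)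
    (hyf : ∀ t : ℝ, 0 ≤ t → yf t = yf 0 + ∫ q in (0 : ℝ)..t, g q)
    (hInt : ∀ t, 0 ≤ t → IntervalIntegrable g volume 0 t) :
    ContinuousOn yf (Set.Ici 0) := by
  intro s hs
  rw [Set.mem_Ici] at hs
  have hint : IntervalIntegrable g volume 0 (s+1) := hInt _ (by linarith)
  have hc : ContinuousOn (fun u => yf 0 + ∫ q in (0:ℝ)..u, g q) (Set.uIcc 0 (s+1)) :=
    continuousOn_const.add
      (intervalIntegral.continuousOn_primitive_interval' hint Set.left_mem_uIcc)
  rw [Set.uIcc_of_le (by linarith : (0:ℝ) ≤ s + 1)] at hc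
  have hcW : ContinuousWithinAt (fun u => yf 0 + ∫ q in (0:ℝ)..u, g q)
      (Set.Icc 0 (s+1)) s := hc s ⟨hs, by linarith⟩
  have hmem : Set.Icc (0:ℝ) (s+1) ∈ nhdsWithin s (Set.Ici 0) := by
    rw [← Set.Ici_inter_Iic]
    exact Filter.inter_mem self_mem_nhdsWithin
      (mem_nhdsWithin_of_mem_nhds (Iic_mem_nhds (by linarith)))
  refine (hcW.mono_of_mem_nhdsWithin hmem).congr ?_ ?_
  · intro u hu; exact hyf u hu
  · exact hyf s hs

lemma dac_gUC (d₂ : ℕ) (G : Euc d₂ → Euc d₂) (hGc : Continuous G)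
    (yf g : ℝ → Euc d₂) (hg : ∀ t, g t = G (yf t))
    (R B : ℝ) (hR0 : 0 ≤ R)
    (hB : ∀ t : ℝ, 0 ≤ t → ‖yf t‖ ≤ B)
    (hLip : ∀ s t, 0 ≤ s → s ≤ t → ‖yf t - yf s‖ ≤ R * (t - s)) :
    ∀ ε > (0:ℝ), ∃ δ > (0:ℝ), ∀ s t, 0 ≤ s → 0 ≤ t → |t - s| ≤ δ →
      ‖g t - g s‖ ≤ ε := by
  intro ε hε
  have hK : IsCompact (Metric.closedBall (0:Euc d₂) B) := isCompact_closedBall _ _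
  have hUC := hK.uniformContinuousOn_of_continuous hGc.continuousOn
  rw [Metric.uniformContinuousOn_iff] at hUC
  obtain ⟨δ₁, hδ₁, hδ⟩ := hUC ε hε
  refine ⟨δ₁ / (2*(R+1)), by positivity, ?_⟩
  have key : ∀ s t, 0 ≤ s → s ≤ t → t - s ≤ δ₁/(2*(R+1)) → ‖g t - g s‖ ≤ ε := by
    intro s t hs hst hd
    have h1 : ‖yf t - yf s‖ ≤ R * (t - s) := hLip s t hs hst
    have h2 : R * (t - s) < δ₁ := by
      have : R * (t - s) ≤ R * (δ₁/(2*(R+1))) := by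
        apply mul_le_mul_of_nonneg_left hd hR0
      have h3 : R * (δ₁/(2*(R+1))) < δ₁ := by
        rw [div_eq_mul_inv, ← mul_assoc]
        rw [show R * δ₁ * (2*(R+1))⁻¹ = δ₁ * (R / (2*(R+1))) by ring]
        have : R / (2*(R+1)) < 1 := by
          rw [div_lt_one (by positivity)]; linarith
        nlinarith
      linarith
    have hmem : ∀ u, 0 ≤ u → yf u ∈ Metric.closedBall (0:Euc d₂) B := by
      intro u hu; rw [Metric.mem_closedBall, dist_zero_right]; exact hB u hu
    have := hδ (yf t) (hmem t (hs.trans hst)) (yf s) (hmem s hs) (by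
      rw [dist_eq_norm]; linarith)
    rw [dist_eq_norm] at this
    rw [hg t, hg s]
    exact this.le
  intro s t hs ht hd
  rcases le_total s t with hst | hst
  · exact key s t hs hst (by rw [abs_of_nonneg (by linarith)] at hd; linarith)
  · rw [← norm_neg]; simp only [neg_sub]
    exact key t s ht hst (by rw [abs_of_nonpos (by linarith)] at hd; linarith)

lemma dac_key (d₁ d₂ : ℕ)
    (C : Euc d₁ →ₗ[ℝ] Euc d₂) (w : Euc d₂)
    (Jhat : Euc d₁ → ℝ)
    (L : Euc d₁ → Euc d₂ → ℝ)
    (hL : ∀ x y, L x y = Jhat x + ⟪y, C x - w⟫)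
    (lam : Euc d₂ → Euc d₁)
    (hmin : ∀ y' : Euc d₂, ∀ x : Euc d₁, L (lam y') y' ≤ L x y') :
    ∀ u v : Euc d₂, ⟪v - u, C (lam v) - w⟫ ≤ L (lam v) v - L (lam u) u := by
  intro u v
  have h1 := hmin u (lam v)
  have h2 : L (lam v) u = L (lam v) v - ⟪v - u, C (lam v) - w⟫ := by
    rw [hL, hL, inner_sub_left]; ring
  linarith

lemma dac_step (d₁ d₂ : ℕ)
    (C : Euc d₁ →ₗ[ℝ] Euc d₂) (w : Euc d₂)
    (Jhat : Euc d₁ → ℝ)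
    (L : Euc d₁ → Euc d₂ → ℝ)
    (hL : ∀ x y, L x y = Jhat x + ⟪y, C x - w⟫)
    (lam : Euc d₂ → Euc d₁)
    (hmin : ∀ y' : Euc d₂, ∀ x : Euc d₁, L (lam y') y' ≤ L x y')
    (yf g : ℝ → Euc d₂) (hg : ∀ t, g t = C (lam (yf t)) - w)
    (R : ℝ) (hR0 : 0 ≤ R) (hgR : ∀ t, 0 ≤ t → ‖g t‖ ≤ R)
    (hInt : ∀ s t, 0 ≤ s → s ≤ t → IntervalIntegrable g volume s t)
    (hgCont : ContinuousOn g (Set.Ici 0))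
    (hydiff : ∀ s t, 0 ≤ s → s ≤ t → yf t - yf s = ∫ q in s..t, g q) :
    ∀ s t e, 0 ≤ s → s ≤ t → (∀ q, s ≤ q → q ≤ t → ‖g q - g s‖ ≤ e) →
      (t - s) * (‖g s‖^2 - 2*R*e) ≤ L (lam (yf t)) (yf t) - L (lam (yf s)) (yf s) := by
  intro s t e hs hst he
  have he0 : 0 ≤ e := le_trans (norm_nonneg (g s - g s)) (he s le_rfl hst)
  have hkey' : ⟪yf t - yf s, g t⟫ ≤ L (lam (yf t)) (yf t) - L (lam (yf s)) (yf s) := by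
    have := dac_key d₁ d₂ C w Jhat L hL lam hmin (yf s) (yf t)
    rwa [← hg t] at this
  have hinner : ⟪yf t - yf s, g t⟫ = ∫ q in s..t, ⟪g q, g t⟫ := by
    rw [hydiff s t hs hst]
    have hcomm := (innerSL ℝ (g t)).intervalIntegral_comp_comm (hInt s t hs hst)
    rw [real_inner_comm]
    change (innerSL ℝ (g t)) (∫ q in s..t, g q) = _
    rw [← hcomm]
    apply intervalIntegral.integral_congr
    intro q hq
    show ⟪g t, g q⟫ = ⟪g q, g t⟫
    exact real_inner_comm _ _
  have hsub : Set.uIcc s t ⊆ Set.Ici (0:ℝ) := by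
    rw [Set.uIcc_of_le hst]
    exact fun q hq => hs.trans hq.1
  have hintlow : ∫ q in s..t, (‖g s‖^2 - 2*R*e) ≤ ∫ q in s..t, ⟪g q, g t⟫ := by
    apply intervalIntegral.integral_mono_on hst
    · exact intervalIntegrable_const
    · exact (ContinuousOn.inner (hgCont.mono hsub) continuousOn_const).intervalIntegrable
    · intro q hq
      have hq0 : 0 ≤ q := hs.trans hq.1
      have ht0 : 0 ≤ t := hs.trans hst
      have h1 : ⟪g q, g t⟫ = ⟪g s, g s⟫ + ⟪g q - g s, g t⟫ + ⟪g s, g t - g s⟫ := by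
        rw [inner_sub_left, inner_sub_right]; ring
      have e1 : |⟪g q - g s, g t⟫| ≤ e * R :=
        (abs_real_inner_le_norm _ _).trans
          (mul_le_mul (he q hq.1 hq.2) (hgR t ht0) (norm_nonneg _) he0)
      have e2 : |⟪g s, g t - g s⟫| ≤ R * e :=
        (abs_real_inner_le_norm _ _).trans
          (mul_le_mul (hgR s hs) (he t hst le_rfl) (norm_nonneg _) hR0)
      have e3 : ⟪g s, g s⟫ = ‖g s‖^2 := real_inner_self_eq_norm_sq _
      rw [abs_le] at e1 e2
      nlinarith [e1.1, e2.1]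
  rw [intervalIntegral.integral_const, smul_eq_mul] at hintlow
  linarith [hinner ▸ hkey']

lemma dac_mono (d₂ : ℕ) (g : ℝ → Euc d₂) (h : ℝ → ℝ) (R : ℝ) (hR0 : 0 ≤ R)
    (hstep' : ∀ s t e, 0 ≤ s → s ≤ t → (∀ q, s ≤ q → q ≤ t → ‖g q - g s‖ ≤ e) →
      (t - s) * (‖g s‖^2 - 2*R*e) ≤ h t - h s)
    (hgUC' : ∀ ε > (0:ℝ), ∃ δ > (0:ℝ), ∀ s t, 0 ≤ s → 0 ≤ t → |t - s| ≤ δ →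
      ‖g t - g s‖ ≤ ε) :
    ∀ s t, 0 ≤ s → s ≤ t → h s ≤ h t := by
  intro s t hs hst
  rcases eq_or_lt_of_le hst with rfl | hlt
  · exact le_rfl
  apply le_of_forall_pos_le_add
  intro ε hε
  set e := ε / (2*R*(t-s) + 1) with hedef
  have hts : 0 < t - s := by linarith
  have he : 0 < e := by positivity
  obtain ⟨δ, hδ, hUC⟩ := hgUC' e he
  obtain ⟨n, hn⟩ := exists_nat_gt ((t - s)/δ)
  have hn0 : 0 < (n:ℝ) := lt_of_le_of_lt (by positivity) hn
  set Δ := (t - s)/n with hΔdef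
  have hΔ0 : 0 < Δ := by positivity
  have hΔδ : Δ ≤ δ := by
    rw [hΔdef, div_le_iff₀ hn0]
    rw [div_lt_iff₀ hδ] at hn
    nlinarith
  set p : ℕ → ℝ := fun i => s + i*Δ with hpdef
  have hp0 : p 0 = s := by simp [hpdef]
  have hpn : p n = t := by
    simp only [hpdef, hΔdef]
    field_simp
    ring
  have hpmono : ∀ i : ℕ, p i ≤ p (i+1) := by
    intro i
    simp only [hpdef]
    have : (i:ℝ) * Δ ≤ (i+1)*Δ := by nlinarith
    push_cast
    linarith
  have hpnonneg : ∀ i : ℕ, 0 ≤ p i := by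
    intro i
    simp only [hpdef]
    positivity
  have htel : h t - h s = ∑ i ∈ Finset.range n, (h (p (i+1)) - h (p i)) := by
    rw [Finset.sum_range_sub (fun i => h (p i)), hp0, hpn]
  have hstep_i : ∀ i ∈ Finset.range n, -(Δ*(2*R*e)) ≤ h (p (i+1)) - h (p i) := by
    intro i hi
    have hUCk : ∀ q, p i ≤ q → q ≤ p (i+1) → ‖g q - g (p i)‖ ≤ e := by
      intro q hq1 hq2
      apply hUC (p i) q (hpnonneg i) ((hpnonneg i).trans hq1)
      rw [abs_of_nonneg (by linarith)]
      have : p (i+1) - p i = Δ := by simp [hpdef]; push_cast; ring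
      linarith
    have := hstep' (p i) (p (i+1)) e (hpnonneg i) (hpmono i) hUCk
    have hpd : p (i+1) - p i = Δ := by simp [hpdef]; push_cast; ring
    rw [hpd] at this
    nlinarith [sq_nonneg ‖g (p i)‖, hΔ0.le, this]
  have hsum : ∑ i ∈ Finset.range n, -(Δ*(2*R*e)) ≤ h t - h s := by
    rw [htel]; exact Finset.sum_le_sum hstep_i
  rw [Finset.sum_const, Finset.card_range, nsmul_eq_mul] at hsum
  have hkeysum : (n:ℝ) * -(Δ*(2*R*e)) = -((t-s)*(2*R*e)) := by
    field_simp [hΔdef]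
    have hnΔ : (n:ℝ) * Δ = t - s := by rw [hΔdef]; field_simp [hn0.ne']
    rw [hnΔ]; ring
  rw [hkeysum] at hsum
  have hfin : (t-s)*(2*R*e) ≤ ε := by
    rw [hedef]
    rw [div_eq_mul_inv]
    have ha : 0 < 2*R*(t-s) + 1 := by positivity
    rw [show (t-s)*(2*R*(ε * (2*R*(t-s)+1)⁻¹)) = (2*R*(t-s)) * (2*R*(t-s)+1)⁻¹ * ε by ring]
    have : (2*R*(t-s)) * (2*R*(t-s)+1)⁻¹ ≤ 1 := by
      rw [← div_eq_mul_inv, div_le_one ha]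
      linarith
    nlinarith
  linarith

lemma dac_T1 (d₂ : ℕ) (g : ℝ → Euc d₂) (h : ℝ → ℝ) (R M : ℝ) (hR0 : 0 ≤ R)
    (hstep' : ∀ s t e, 0 ≤ s → s ≤ t → (∀ q, s ≤ q → q ≤ t → ‖g q - g s‖ ≤ e) →
      (t - s) * (‖g s‖^2 - 2*R*e) ≤ h t - h s)
    (hgUC' : ∀ ε > (0:ℝ), ∃ δ > (0:ℝ), ∀ s t, 0 ≤ s → 0 ≤ t → |t - s| ≤ δ →
      ‖g t - g s‖ ≤ ε)
    (hmono : ∀ s t, 0 ≤ s → s ≤ t → h s ≤ h t)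
    (hM : ∀ t, 0 ≤ t → h t ≤ M) :
    Tendsto (fun t : ℝ => ‖g t‖) atTop (𝓝 0) := by
  rw [Metric.tendsto_atTop]
  by_contra hcon
  push_neg at hcon
  obtain ⟨ε, hε, hbad⟩ := hcon
  have hdist : ∀ t : ℝ, dist ‖g t‖ 0 = ‖g t‖ := by
    intro t; rw [Real.dist_eq, sub_zero, abs_of_nonneg (norm_nonneg _)]
  set e := ε^2 / (4*R + 1) with hedef
  have he : 0 < e := by positivity
  obtain ⟨δ, hδ, hUC⟩ := hgUC' e he
  set c := δ * (ε^2 - 2*R*e) with hcdef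
  have hc : 0 < c := by
    have h1 : 2*R*e ≤ ε^2 / 2 := by
      have h41 : (0:ℝ) < 4*R + 1 := by positivity
      rw [hedef, show 2*R*(ε^2/(4*R+1)) = (2*R*ε^2)/(4*R+1) by ring,
        div_le_div_iff₀ h41 (by norm_num : (0:ℝ) < 2)]
      nlinarith [sq_nonneg ε]
    have : 0 < ε^2 - 2*R*e := by nlinarith [sq_nonneg ε]
    positivity
  have claim : ∀ n : ℕ, ∃ s, 0 ≤ s ∧ h 0 + n * c ≤ h s := by
    intro n
    induction n with
    | zero => exact ⟨0, le_rfl, by simp⟩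
    | succ n ih =>
      obtain ⟨s, hs0, hsle⟩ := ih
      obtain ⟨t, hts, hgt⟩ := hbad (max s 0)
      have ht0 : 0 ≤ t := le_trans (le_max_right s 0) hts
      have hst : s ≤ t := le_trans (le_max_left s 0) hts
      rw [hdist] at hgt
      have hUCk : ∀ q, t ≤ q → q ≤ t + δ → ‖g q - g t‖ ≤ e := by
        intro q hq1 hq2
        exact hUC t q ht0 (ht0.trans hq1) (by rw [abs_of_nonneg (by linarith)]; linarith)
      have hstepk := hstep' t (t + δ) e ht0 (by linarith) hUCk
      have hnormsq : ε^2 ≤ ‖g t‖^2 := by nlinarith [norm_nonneg (g t)]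
      have hgain : c ≤ h (t + δ) - h t := by
        have : δ * (ε^2 - 2*R*e) ≤ (t + δ - t) * (‖g t‖^2 - 2*R*e) := by
          have h2 : t + δ - t = δ := by ring
          rw [h2]
          nlinarith
        linarith
      refine ⟨t + δ, by linarith, ?_⟩
      have hmono1 : h s ≤ h t := hmono s t hs0 hst
      push_cast
      linarith
  obtain ⟨n, hn⟩ := exists_nat_gt ((M - h 0) / c)
  obtain ⟨s, hs0, hsle⟩ := claim n
  rw [div_lt_iff₀ hc] at hn
  have := hM s hs0
  linarith

lemma dac_claim2 (d₂ : ℕ) (G : Euc d₂ → Euc d₂) (hGc : Continuous G) (B : ℝ) :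
    ∀ ε > (0:ℝ), ∃ ρ > (0:ℝ), ∀ v : Euc d₂, ‖v‖ ≤ B → ‖G v‖ ≤ ρ →
      Metric.infDist v {v' : Euc d₂ | G v' = 0} < ε := by
  intro ε hε
  by_contra hcon
  push_neg at hcon
  have hsel : ∀ n : ℕ, ∃ v : Euc d₂, ‖v‖ ≤ B ∧ ‖G v‖ ≤ 1/(n+1) ∧
      ε ≤ Metric.infDist v {v' : Euc d₂ | G v' = 0} := by
    intro n
    obtain ⟨v, hv1, hv2, hv3⟩ := hcon (1/(n+1)) (by positivity)
    exact ⟨v, hv1, hv2, hv3⟩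
  choose v hv1 hv2 hv3 using hsel
  have hmem : ∀ n, v n ∈ Metric.closedBall (0:Euc d₂) B := by
    intro n; rw [Metric.mem_closedBall, dist_zero_right]; exact hv1 n
  obtain ⟨v0, hv0mem, φ, hφ, hlim⟩ :=
    (isCompact_closedBall (0:Euc d₂) B).tendsto_subseq hmem
  have hGlim : Tendsto (fun n => G (v (φ n))) atTop (𝓝 (G v0)) :=
    (hGc.tendsto v0).comp hlim
  have hGzero : Tendsto (fun n => G (v (φ n))) atTop (𝓝 0) := by
    apply squeeze_zero_norm (fun n => hv2 (φ n))
    have h1 : Tendsto (fun n : ℕ => 1/((n:ℝ)+1)) atTop (𝓝 0) :=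
      tendsto_one_div_add_atTop_nhds_zero_nat
    exact h1.comp (hφ.tendsto_atTop.comp tendsto_id) |>.congr (by intro n; simp)
  have hGv0 : G v0 = 0 := tendsto_nhds_unique hGlim hGzero
  have hd0 : Metric.infDist v0 {v' : Euc d₂ | G v' = 0} = 0 :=
    Metric.infDist_zero_of_mem hGv0
  have hdlim : Tendsto (fun n => Metric.infDist (v (φ n)) {v' : Euc d₂ | G v' = 0})
      atTop (𝓝 (Metric.infDist v0 {v' : Euc d₂ | G v' = 0})) :=
    ((Metric.continuous_infDist_pt _).tendsto v0).comp hlim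
  have := ge_of_tendsto hdlim (Eventually.of_forall fun n => hv3 (φ n))
  rw [hd0] at this
  linarith

/-- Along any bounded solution of `ẏ = Cλ(y) − w`, one has
`‖Cλ(y(t)) − w‖ → 0` and `dist(y(t), 𝒴) → 0`, where `𝒴 = {y' : Cλ(y') = w}`. -/
theorem dual_ascent_convergence
    (d₁ d₂ : ℕ) (hd₁ : 0 < d₁) (hd₂ : 0 < d₂)
    (C : Euc d₁ →ₗ[ℝ] Euc d₂) (w : Euc d₂)
    (Jhat : Euc d₁ → ℝ) (hJhat : Continuous Jhat)
    (L : Euc d₁ → Euc d₂ → ℝ)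
    (hL : ∀ x y, L x y = Jhat x + ⟪y, C x - w⟫)
    (lam : Euc d₂ → Euc d₁) (hlam : Continuous lam)
    (K' : ℝ) (hK' : 0 < K')
    -- λ(y') attains the infimum of L(·,y') and has linear growth
    (hmin : ∀ y' : Euc d₂, ∀ x : Euc d₁, L (lam y') y' ≤ L x y')
    (hgrow : ∀ y' : Euc d₂, ‖lam y'‖ ≤ K' * (1 + ‖y'‖))
    -- the dual function Q(y') = inf_x L(x,y') = L(λ(y'),y') is bounded above
    (M : ℝ) (hQbd : ∀ y' : Euc d₂, L (lam y') y' ≤ M)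
    -- y solves the o.d.e. ẏ = Cλ(y) − w on [0,∞) and is bounded
    (yf : ℝ → Euc d₂)
    (hyf : ∀ t : ℝ, 0 ≤ t → yf t = yf 0 + ∫ q in (0 : ℝ)..t, (C (lam (yf q)) - w))
    (B : ℝ) (hB : ∀ t : ℝ, 0 ≤ t → ‖yf t‖ ≤ B) :
    Tendsto (fun t : ℝ => ‖C (lam (yf t)) - w‖) atTop (𝓝 0) ∧
    Tendsto (fun t : ℝ => Metric.infDist (yf t) {y' : Euc d₂ | C (lam y') = w})
      atTop (𝓝 0) := by
  classical
  set G : Euc d₂ → Euc d₂ := fun v => C (lam v) - w with hGdef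
  set g : ℝ → Euc d₂ := fun t => G (yf t) with hgdef
  have hgeq : ∀ t, g t = C (lam (yf t)) - w := fun t => rfl
  have hGc : Continuous G := by
    have h1 : Continuous fun v : Euc d₂ => C (lam v) :=
      (LinearMap.continuous_of_finiteDimensional C).comp hlam
    exact h1.sub continuous_const
  have hB0 : 0 ≤ B := (norm_nonneg _).trans (hB 0 le_rfl)
  set NC : ℝ := ‖LinearMap.toContinuousLinearMap C‖ with hNCdef
  have hNC : ∀ x, ‖C x‖ ≤ NC * ‖x‖ := by
    intro x
    have := (LinearMap.toContinuousLinearMap C).le_opNorm x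
    simpa using this
  have hNC0 : 0 ≤ NC := norm_nonneg _
  set R : ℝ := NC * (K' * (1 + B)) + ‖w‖ with hRdef
  have hGbound : ∀ v : Euc d₂, ‖v‖ ≤ B → ‖G v‖ ≤ R := by
    intro v hv
    have h1 := hNC (lam v)
    have h2 := hgrow v
    have h3 := norm_nonneg v
    have h4 := norm_nonneg (lam v)
    have h5 : ‖G v‖ ≤ ‖C (lam v)‖ + ‖w‖ := norm_sub_le _ _
    have h6 : NC * ‖lam v‖ ≤ NC * (K' * (1 + ‖v‖)) := mul_le_mul_of_nonneg_left h2 hNC0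
    have h7 : K' * (1 + ‖v‖) ≤ K' * (1 + B) :=
      mul_le_mul_of_nonneg_left (by linarith) hK'.le
    have h8 : NC * (K' * (1 + ‖v‖)) ≤ NC * (K' * (1 + B)) :=
      mul_le_mul_of_nonneg_left h7 hNC0
    rw [hRdef]
    linarith
  have hR0 : 0 ≤ R := (norm_nonneg (G (yf 0))).trans (hGbound _ (hB 0 le_rfl))
  have hgR : ∀ t, 0 ≤ t → ‖g t‖ ≤ R := fun t ht => hGbound _ (hB t ht)
  have hInt : ∀ t, 0 ≤ t → IntervalIntegrable g volume 0 t := by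
    apply dac_aux_integrable d₂ G yf
    · exact hyf
    · intro t ht; exact hgR t ht
  have hIntst := dac_Intst d₂ g hInt
  have hydiff := dac_ydiff d₂ yf g hyf hInt
  have hyLip := dac_yLip d₂ yf g hyf hInt R hgR
  have hyCont := dac_yCont d₂ yf g hyf hInt
  have hgCont : ContinuousOn g (Set.Ici 0) := hGc.comp_continuousOn hyCont
  have hgUC := dac_gUC d₂ G hGc yf g (fun t => rfl) R B hR0 hB hyLip
  set h : ℝ → ℝ := fun t => L (lam (yf t)) (yf t) with hhdef
  have hstep' := dac_step d₁ d₂ C w Jhat L hL lam hmin yf g hgeq R hR0 hgR hIntst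
    hgCont hydiff
  have hmono := dac_mono d₂ g h R hR0 hstep' hgUC
  have hM : ∀ t, 0 ≤ t → h t ≤ M := fun t _ => hQbd _
  have T1 : Tendsto (fun t : ℝ => ‖g t‖) atTop (𝓝 0) :=
    dac_T1 d₂ g h R M hR0 hstep' hgUC hmono hM
  constructor
  · exact T1
  · have hset : {y' : Euc d₂ | C (lam y') = w} = {v' : Euc d₂ | G v' = 0} := by
      ext v'
      simp only [Set.mem_setOf_eq, hGdef, sub_eq_zero]
    rw [hset]
    rw [Metric.tendsto_atTop]
    intro ε hε
    obtain ⟨ρ, hρ, hclaim⟩ := dac_claim2 d₂ G hGc B ε hε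
    rw [Metric.tendsto_atTop] at T1
    obtain ⟨N, hN⟩ := T1 ρ hρ
    refine ⟨max N 0, ?_⟩
    intro t ht
    have ht0 : 0 ≤ t := le_trans (le_max_right N 0) ht
    have htN : N ≤ t := le_trans (le_max_left N 0) ht
    have hgt := hN t htN
    rw [Real.dist_eq, sub_zero, abs_of_nonneg (norm_nonneg _)] at hgt
    have := hclaim (yf t) (hB t ht0) hgt.le
    rw [Real.dist_eq, sub_zero, abs_of_nonneg Metric.infDist_nonneg]
    exact this
end
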